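/- Let q be a positive rational and let α be a positive irreducible n-th root of q (i.e., α = q^{1/n} with α, α², …, α^{n−1} all irrational). Then 1, α, α², …, α^{n−1} are linearly independent over ℚ. -/

import Mathlib

/-- If `α = q^{1/n}` is a positive irreducible `n`-th root of a positive rational `q`
(i.e. `α, α², …, α^{n-1}` are all irrational), then `1, α, …, α^{n-1}` are linearly
independent over `ℚ`. -/
theorem stmt_5 (q : ℚ) (hq : 0 < q) (n : ℕ) (hn : 1 ≤ n) (α : ℝ)
    (hαpos : 0 < α) (hroot : α ^ n = (q : ℝ))
    (hirr : ∀ i, 1 ≤ i → i < n → Irrational (α ^ i)) :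
    LinearIndependent ℚ (fun i : Fin n => α ^ (i : ℕ)) := by
  classical
  have hn0 : n ≠ 0 := by omega
  -- α is integral over ℚ, root of X^n - C q
  set P : Polynomial ℚ := Polynomial.X ^ n - Polynomial.C q with hP
  have hPmonic : P.Monic := Polynomial.monic_X_pow_sub_C q hn0
  have hPaeval : Polynomial.aeval α P = 0 := by
    simp [hP, hroot]
  have hint : IsIntegral ℚ α := ⟨P, hPmonic, hPaeval⟩
  set p := minpoly ℚ α with hp
  have hpmonic : p.Monic := minpoly.monic hint
  have hdvd : p ∣ P := minpoly.dvd ℚ α hPaeval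
  have hPdeg : P.natDegree = n := Polynomial.natDegree_X_pow_sub_C
  have hdlen : p.natDegree ≤ n := by
    have := Polynomial.natDegree_le_of_dvd hdvd hPmonic.ne_zero
    omega
  have hd1 : 1 ≤ p.natDegree := minpoly.natDegree_pos hint
  set d := p.natDegree with hdd
  -- now show d = n using the complex roots
  have hdn : d = n := by
    by_contra hne
    have hdlt : d < n := lt_of_le_of_ne hdlen hne
    -- work in ℂ
    set φ := algebraMap ℚ ℂ
    set pc := p.map φ with hpc
    have hpcmonic : pc.Monic := hpmonic.map φ
    have hpcdeg : pc.natDegree = d := Polynomial.natDegree_map_eq_of_injective φ.injective p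
    have hsplit : pc.Splits := IsAlgClosed.splits pc
    have hcard : pc.roots.card = d := by
      rw [← hpcdeg]
      exact (Polynomial.splits_iff_card_roots.mp hsplit)
    -- every root has absolute value α
    have habs : ∀ z ∈ pc.roots, ‖z‖ = α := by
      intro z hz
      have hzroot : pc.eval z = 0 := (Polynomial.mem_roots hpcmonic.ne_zero).mp hz
      have hdvdc : pc ∣ P.map φ := Polynomial.map_dvd φ hdvd
      have hzP : (P.map φ).eval z = 0 := by
        obtain ⟨c, hc⟩ := hdvdc
        rw [hc, Polynomial.eval_mul, hzroot, zero_mul]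
      have hzn : z ^ n = (q : ℂ) := by
        have h2 : (P.map φ).eval z = z ^ n - (q : ℂ) := by
          simp [hP, φ]
        rw [h2] at hzP
        exact sub_eq_zero.mp hzP
      have habsn : ‖z‖ ^ n = α ^ n := by
        rw [← norm_pow, hzn, hroot]
        rw [show ((q : ℂ)) = (((q : ℝ)) : ℂ) by push_cast; ring, Complex.norm_real, Real.norm_eq_abs]
        exact abs_of_nonneg (by exact_mod_cast hq.le)
      exact pow_left_strictMonoOn₀ hn0 |>.injOn (by simp [norm_nonneg])
        (le_of_lt hαpos) habsn
    -- product of roots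
    have hprod : pc.coeff 0 = (-1) ^ pc.natDegree * pc.roots.prod :=
      hsplit.coeff_zero_eq_prod_roots_of_monic hpcmonic
    have habsprod : ‖pc.coeff 0‖ = α ^ d := by
      rw [hprod, norm_mul, norm_pow, norm_neg, norm_one, one_pow, one_mul]
      have : pc.roots.map (‖·‖) = Multiset.replicate d α := by
        rw [Multiset.eq_replicate]
        constructor
        · rw [Multiset.card_map, hcard]
        · intro b hb
          obtain ⟨z, hz, rfl⟩ := Multiset.mem_map.mp hb
          exact habs z hz
      calc ‖pc.roots.prod‖ = (pc.roots.map (‖·‖)).prod :=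
            map_multiset_prod (normHom : ℂ →*₀ ℝ) pc.roots
        _ = α ^ d := by rw [this, Multiset.prod_replicate]
    -- but coeff 0 comes from a rational
    have hrat : ‖pc.coeff 0‖ = ((|p.coeff 0| : ℚ) : ℝ) := by
      rw [hpc, Polynomial.coeff_map]
      show ‖((p.coeff 0 : ℚ) : ℂ)‖ = _
      rw [show (((p.coeff 0 : ℚ)) : ℂ) = (((p.coeff 0 : ℝ)) : ℂ) by push_cast; ring,
        Complex.norm_real, Real.norm_eq_abs]
      push_cast
      ring
    have : ¬ Irrational (α ^ d) := by
      rw [← habsprod, hrat]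
      exact Rat.not_irrational _
    exact this (hirr d hd1 hdlt)
  have hli := linearIndependent_pow (K := ℚ) (S := ℝ) α
  rw [← hp, ← hdd, hdn] at hli
  exact hli
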